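/- Let Γ = (V,E) be a finite graph and let A be a real symmetric matrix indexed by V with A_{uv} = 0 whenever u = v or {u,v} ∉ E. Suppose the all-ones vector is an eigenvector of A with eigenvalue η1, that η1 is the largest eigenvalue of A, and let η_min be the smallest eigenvalue of A, with η_min < η1. Then every independent set S of Γ satisfies |S| ≤ |V| · (−η_min)/(η1 − η_min). -/

import Mathlib

open Matrix

lemma quad_lower {V : Type*} [Fintype V] [DecidableEq V] (A : Matrix V V ℝ)
    (hsymm : A.IsSymm) (ηmin : ℝ)
    (hmin : ∀ (η : ℝ) (v : V → ℝ), v ≠ 0 → A.mulVec v = η • v → ηmin ≤ η)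
    (x : V → ℝ) : ηmin * (x ⬝ᵥ x) ≤ x ⬝ᵥ (A *ᵥ x) := by
  set B : Matrix V V ℝ := A - ηmin • (1 : Matrix V V ℝ) with hBdef
  have hA : A.IsHermitian := by
    rwa [Matrix.IsHermitian, Matrix.conjTranspose_eq_transpose_of_trivial]
  have hB : B.IsHermitian := by
    apply hA.sub
    simp [Matrix.IsHermitian]
  have hmulB : ∀ v : V → ℝ, B *ᵥ v = A *ᵥ v - ηmin • v := by
    intro v
    simp [hBdef, Matrix.sub_mulVec, Matrix.smul_mulVec, Matrix.one_mulVec]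
  have hev : ∀ i, 0 ≤ hB.eigenvalues i := by
    intro i
    have hvB := hB.mulVec_eigenvectorBasis i
    have hne : (⇑(hB.eigenvectorBasis i) : V → ℝ) ≠ 0 := by
      have := hB.eigenvectorBasis.orthonormal.ne_zero i
      intro h; apply this; ext j; exact congrFun h j
    have hvA : A *ᵥ ⇑(hB.eigenvectorBasis i)
        = (hB.eigenvalues i + ηmin) • ⇑(hB.eigenvectorBasis i) := by
      have h := hmulB (⇑(hB.eigenvectorBasis i))
      rw [hvB] at h
      rw [add_smul, h, sub_add_cancel]
    have := hmin _ _ hne hvA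
    linarith
  have hps : B.PosSemidef := hB.posSemidef_iff_eigenvalues_nonneg.mpr hev
  have h0 := hps.dotProduct_mulVec_nonneg x
  rw [hmulB] at h0
  simp only [dotProduct_sub, dotProduct_smul, star_trivial, smul_eq_mul] at h0
  linarith

theorem ratio_bound {V : Type*} [Fintype V] [DecidableEq V]
    (G : SimpleGraph V) (A : Matrix V V ℝ)
    (hsymm : A.IsSymm)
    (hzero : ∀ u v : V, ¬ G.Adj u v → A u v = 0)
    (η1 ηmin : ℝ)
    (hones : A.mulVec (fun _ => 1) = η1 • (fun _ => (1 : ℝ)))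
    (hmax : ∀ (η : ℝ) (v : V → ℝ), v ≠ 0 → A.mulVec v = η • v → η ≤ η1)
    (hminEx : ∃ v : V → ℝ, v ≠ 0 ∧ A.mulVec v = ηmin • v)
    (hmin : ∀ (η : ℝ) (v : V → ℝ), v ≠ 0 → A.mulVec v = η • v → ηmin ≤ η)
    (hlt : ηmin < η1)
    (S : Finset V) (hS : ∀ u ∈ S, ∀ v ∈ S, ¬ G.Adj u v) :
    (S.card : ℝ) ≤ (Fintype.card V : ℝ) * (-ηmin) / (η1 - ηmin) := by
  obtain ⟨v0, hv0, -⟩ := hminEx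
  have hneV : Nonempty V := not_isEmpty_iff.mp (fun h => hv0 (funext fun u => (h.false u).elim))
  set n : ℝ := (Fintype.card V : ℝ) with hn
  set s : ℝ := (S.card : ℝ) with hs
  have hnpos : 0 < n := by
    rw [hn]; exact_mod_cast Fintype.card_pos
  have hspos : 0 ≤ s := by positivity
  -- ηmin ≤ 0
  have hηmin0 : ηmin ≤ 0 := by
    obtain ⟨u⟩ := hneV
    have h := quad_lower A hsymm ηmin hmin (Pi.single u 1)
    have h1 : (Pi.single u 1 : V → ℝ) ⬝ᵥ (Pi.single u 1) = 1 := by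
      simp [dotProduct, Pi.single_apply]
    have h2 : (Pi.single u 1 : V → ℝ) ⬝ᵥ (A *ᵥ Pi.single u 1) = A u u := by
      simp [Matrix.mulVec_single, dotProduct, Pi.single_apply]
    rw [h1, h2, hzero u u (G.irrefl)] at h
    linarith
  -- the test vector
  set χ : V → ℝ := fun v => if v ∈ S then 1 else 0 with hχ
  set ones : V → ℝ := fun _ => 1 with hones1
  have hχones : χ ⬝ᵥ ones = s := by
    simp [dotProduct, hχ, hones1, hs]
  have honesχ : ones ⬝ᵥ χ = s := by
    simp [dotProduct, hχ, hones1, hs]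
  have hχχ : χ ⬝ᵥ χ = s := by
    simp [dotProduct, hχ, hs, ite_and]
  have honesones : ones ⬝ᵥ ones = n := by
    simp [dotProduct, hones1, hn]
  have hχAχ : χ ⬝ᵥ (A *ᵥ χ) = 0 := by
    rw [dotProduct]
    apply Finset.sum_eq_zero
    intro u _
    rw [Matrix.mulVec, dotProduct, Finset.mul_sum]
    apply Finset.sum_eq_zero
    intro v _
    by_cases hu : u ∈ S
    · by_cases hv : v ∈ S
      · rw [hzero u v (hS u hu v hv)]; ring
      · simp [hχ, hv]
    · simp [hχ, hu]
  have hχAones : χ ⬝ᵥ (A *ᵥ ones) = η1 * s := by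
    rw [hones, dotProduct_smul, hχones]; simp
  have honesAχ : ones ⬝ᵥ (A *ᵥ χ) = η1 * s := by
    rw [Matrix.dotProduct_mulVec, ← Matrix.mulVec_transpose, hsymm.eq]
    rw [hones, smul_dotProduct, honesχ]; simp
  have honesAones : ones ⬝ᵥ (A *ᵥ ones) = η1 * n := by
    rw [hones, dotProduct_smul, honesones]; simp
  set c : ℝ := s / n with hc
  set x : V → ℝ := χ - c • ones with hx
  have hkey := quad_lower A hsymm ηmin hmin x
  have hxx : x ⬝ᵥ x = s - c * s - c * s + c * c * n := by
    rw [hx]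
    simp only [sub_dotProduct, dotProduct_sub, smul_dotProduct,
      dotProduct_smul, smul_eq_mul]
    rw [hχχ, hχones, honesχ, honesones]
    ring
  have hxAx : x ⬝ᵥ (A *ᵥ x) = -(c * η1 * s) - c * η1 * s + c * c * (η1 * n) := by
    rw [hx, Matrix.mulVec_sub, Matrix.mulVec_smul]
    simp only [sub_dotProduct, dotProduct_sub, smul_dotProduct,
      dotProduct_smul, smul_eq_mul]
    rw [hχAχ, hχAones, honesAχ, honesAones]
    ring
  rw [hxx, hxAx] at hkey
  have hcn : c * n = s := by
    rw [hc]; field_simp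
  -- goal: s ≤ n * (-ηmin) / (η1 - ηmin)
  have hn0 : n ≠ 0 := ne_of_gt hnpos
  have hkey' : ηmin * (s - s * s / n) ≤ -(η1 * (s * s / n)) := by
    calc ηmin * (s - s * s / n)
        = ηmin * (s - c * s - c * s + c * c * n) := by rw [hc]; field_simp; ring
      _ ≤ -(c * η1 * s) - c * η1 * s + c * c * (η1 * n) := hkey
      _ = -(η1 * (s * s / n)) := by rw [hc]; field_simp; ring
  have h4 : ηmin * (s * n - s * s) ≤ -(η1 * (s * s)) := by
    have hm := mul_le_mul_of_nonneg_left hkey' hnpos.le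
    have l : n * (ηmin * (s - s * s / n)) = ηmin * (s * n - s * s) := by
      field_simp
    have r : n * (-(η1 * (s * s / n))) = -(η1 * (s * s)) := by
      field_simp
    rw [l, r] at hm
    exact hm
  rw [le_div_iff₀ (by linarith : (0:ℝ) < η1 - ηmin)]
  clear_value n s c x
  clear hkey hkey' hxx hxAx hx hc hcn hχones honesχ hχχ honesones hχAχ hχAones honesAχ honesAones
  rcases eq_or_lt_of_le hspos with h0 | h0
  · have h5 : 0 ≤ n * (-ηmin) := mul_nonneg hnpos.le (by linarith)
    rw [← h0]
    linarith
  · have h5 : s * (s * (η1 - ηmin)) ≤ s * (n * -ηmin) := by nlinarith [h4]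
    have h6 := le_of_mul_le_mul_left h5 h0
    linarith
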